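/- Let d ≥ 1, 1 ≤ s ≤ d, γ > 1, 0 ≤ τ < γ − 1, λ > 0, κ > 0, and set c₀ = (γ+τ+1)/(γ−τ−1). Let Ĉ be a real d×d symmetric positive semidefinite matrix and ε a real d×d matrix such that: (i) for every u in the cone C(s,c₀), uᵀĈu ≥ κ²·‖u‖₂²; and (ii) every entry of ε has absolute value at most λ/γ. Let A₀ be a row-s-sparse d×d matrix and let Â be a minimizer over d×d matrices of L(A) = tr(Aᵀε) + ½·tr((A−A₀)Ĉ(A−A₀)ᵀ) + λ·|A|₁. Then for every row-s-sparse d×d matrix A: 2τγ⁻¹λ·|Â−A|₁ + tr((Â−A₀)Ĉ(Â−A₀)ᵀ) ≤ tr((A−A₀)Ĉ(A−A₀)ᵀ) + ((1+γ+τ)/(γκ))²·λ²·d·s. -/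

import Mathlib

open Matrix

/-- Entrywise ℓ¹ norm of a matrix. -/
noncomputable def matL1 {d : ℕ} (M : Matrix (Fin d) (Fin d) ℝ) : ℝ :=
  ∑ i, ∑ j, |M i j|

/-- The Lasso objective `L(A) = tr(Aᵀ ε) + ½ tr((A - A₀) Ĉ (A - A₀)ᵀ) + λ |A|₁`. -/
noncomputable def lassoObj {d : ℕ} (Chat eps A₀ : Matrix (Fin d) (Fin d) ℝ) (lam : ℝ)
    (A : Matrix (Fin d) (Fin d) ℝ) : ℝ :=
  (Aᵀ * eps).trace + (1 / 2) * ((A - A₀) * Chat * (A - A₀)ᵀ).trace + lam * matL1 A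

/-- The cone `C(s, c₀)`: vectors whose ℓ¹ norm is at most `(1 + c₀)` times the ℓ¹ norm
of their `s` largest (in absolute value) entries. -/
def inCone {d : ℕ} (s : ℕ) (c₀ : ℝ) (u : Fin d → ℝ) : Prop :=
  ∃ I : Finset (Fin d), I.card = s ∧ (∀ i ∈ I, ∀ j ∉ I, |u j| ≤ |u i|) ∧
    ∑ j, |u j| ≤ (1 + c₀) * ∑ i ∈ I, |u i|

/-- A matrix is row-`s`-sparse if every row has at most `s` nonzero entries. -/
def rowSparse {d : ℕ} (s : ℕ) (A : Matrix (Fin d) (Fin d) ℝ) : Prop :=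
  ∀ i, {j | A i j ≠ 0}.ncard ≤ s
theorem topset {α : Type*} [Fintype α] [DecidableEq α] (f : α → ℝ) (s : ℕ) (hs : s ≤ Fintype.card α) :
    ∃ I : Finset α, I.card = s ∧ ∀ i ∈ I, ∀ j ∉ I, f j ≤ f i := by
  induction s with
  | zero => exact ⟨∅, rfl, by simp⟩
  | succ n ih =>
    obtain ⟨I, hcard, hdom⟩ := ih (Nat.le_of_succ_le hs)
    have hne : (Iᶜ : Finset α).Nonempty := by
      rw [← Finset.card_pos, Finset.card_compl, hcard]; omega
    obtain ⟨j₀, hj₀, hmax⟩ := Finset.exists_max_image Iᶜ f hne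
    refine ⟨insert j₀ I, ?_, ?_⟩
    · rw [Finset.card_insert_of_notMem (Finset.mem_compl.mp hj₀), hcard]
    · intro i hi j hj
      have hjI : j ∉ I := fun h => hj (Finset.mem_insert_of_mem h)
      rcases Finset.mem_insert.mp hi with rfl | hiI
      · exact hmax j (Finset.mem_compl.mpr hjI)
      · exact hdom i hiI j hjI

theorem sum_dom {α : Type*} [Fintype α] [DecidableEq α] (g : α → ℝ) (hg : ∀ x, 0 ≤ g x)
    (S I : Finset α) (hcard : S.card ≤ I.card)
    (hdom : ∀ i ∈ I, ∀ j ∉ I, g j ≤ g i) :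
    ∑ j ∈ S, g j ≤ ∑ i ∈ I, g i := by
  classical
  have hsplit : ∑ j ∈ S, g j = ∑ j ∈ S ∩ I, g j + ∑ j ∈ S \ I, g j :=
    (Finset.sum_inter_add_sum_sdiff S I g).symm
  have hsplit2 : ∑ i ∈ I, g i = ∑ j ∈ I ∩ S, g j + ∑ j ∈ I \ S, g j :=
    (Finset.sum_inter_add_sum_sdiff I S g).symm
  rw [hsplit, hsplit2, Finset.inter_comm]
  have hcard' : (S \ I).card ≤ (I \ S).card := by
    have h1 := Finset.card_inter_add_card_sdiff S I
    have h2 := Finset.card_inter_add_card_sdiff I S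
    rw [Finset.inter_comm] at h2
    omega
  have key : ∑ j ∈ S \ I, g j ≤ ∑ j ∈ I \ S, g j := by
    rcases Finset.eq_empty_or_nonempty (I \ S) with he | hne
    · have : S \ I = ∅ := by
        rw [he] at hcard'; simp at hcard'
        exact Finset.sdiff_eq_empty_iff_subset.mpr hcard'
      simp [this, he]
    · obtain ⟨m, hm, hmin⟩ := Finset.exists_min_image (I \ S) g hne
      have h1 : ∑ j ∈ S \ I, g j ≤ (S \ I).card * g m := by
        rw [← nsmul_eq_mul]
        apply Finset.sum_le_card_nsmul
        intro j hj
        exact hdom m (Finset.mem_sdiff.mp hm).1 j (Finset.mem_sdiff.mp hj).2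
      have h2 : ((I \ S).card : ℝ) * g m ≤ ∑ j ∈ I \ S, g j := by
        rw [← nsmul_eq_mul]
        exact Finset.card_nsmul_le_sum _ _ _ (fun j hj => hmin j hj)
      have h3 : ((S \ I).card : ℝ) * g m ≤ ((I \ S).card : ℝ) * g m := by
        apply mul_le_mul_of_nonneg_right _ (hg m)
        exact_mod_cast hcard'
      linarith
  linarith

lemma arith_key (γ τ lam κ a T s : ℝ) (hγ0 : 0 < γ) (hκ : 0 < κ) (hlam : 0 < lam)
    (hτ0 : 0 ≤ τ) (ha0 : 0 ≤ a) (hs1 : 1 ≤ s) (hT0 : 0 ≤ T)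
    (hP : κ ^ 2 * a ^ 2 ≤ s * T) :
    2 * (lam / γ) * ((γ + 1 + τ) * a) - T ≤ ((1 + γ + τ) / (γ * κ)) ^ 2 * lam ^ 2 * s := by
  have hs0 : (0:ℝ) < s := by linarith
  have hPγ : γ ^ 2 * κ ^ 2 * (κ ^ 2 * a ^ 2) ≤ γ ^ 2 * κ ^ 2 * (s * T) :=
    mul_le_mul_of_nonneg_left hP (by positivity)
  have key2 : (2 * lam * (γ + 1 + τ) * a * γ * κ ^ 2) * s
      ≤ (T * γ ^ 2 * κ ^ 2 + lam ^ 2 * (γ + 1 + τ) ^ 2 * s) * s := by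
    nlinarith [sq_nonneg (γ * κ ^ 2 * a - lam * (γ + 1 + τ) * s)]
  have key3 : 2 * lam * (γ + 1 + τ) * a * γ * κ ^ 2
      ≤ T * γ ^ 2 * κ ^ 2 + lam ^ 2 * (γ + 1 + τ) ^ 2 * s :=
    le_of_mul_le_mul_right key2 hs0
  have hdiffpos : T + ((1 + γ + τ) / (γ * κ)) ^ 2 * lam ^ 2 * s
        - 2 * (lam / γ) * ((γ + 1 + τ) * a)
      = (T * γ ^ 2 * κ ^ 2 + lam ^ 2 * (γ + 1 + τ) ^ 2 * s
        - 2 * lam * (γ + 1 + τ) * a * γ * κ ^ 2) / (γ ^ 2 * κ ^ 2) := by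
    field_simp
    ring
  have h9 : 0 ≤ T + ((1 + γ + τ) / (γ * κ)) ^ 2 * lam ^ 2 * s
      - 2 * (lam / γ) * ((γ + 1 + τ) * a) := by
    rw [hdiffpos]
    apply div_nonneg (by linarith) (by positivity)
  linarith

theorem row_core (d s : ℕ) (hs : 1 ≤ s) (hsd : s ≤ d)
    (γ τ lam κ : ℝ) (hγ : 1 < γ) (hτ0 : 0 ≤ τ) (hτ : τ < γ - 1)
    (hlam : 0 < lam) (hκ : 0 < κ)
    (c₀ : ℝ) (hc₀ : c₀ = (γ + τ + 1) / (γ - τ - 1))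
    (Chat : Matrix (Fin d) (Fin d) ℝ) (hC : Chat.PosSemidef)
    (hRE : ∀ u : Fin d → ℝ, inCone s c₀ u → κ ^ 2 * ∑ i, u i ^ 2 ≤ u ⬝ᵥ Chat *ᵥ u)
    (u w : Fin d → ℝ) (hw : {j | w j ≠ 0}.ncard ≤ s) :
    2 * τ * γ⁻¹ * lam * (∑ j, |u j|) + 2 * lam * (∑ j, (|w j| - |u j + w j|))
      + 2 * (lam / γ) * (∑ j, |u j|) - u ⬝ᵥ Chat *ᵥ u
      ≤ ((1 + γ + τ) / (γ * κ)) ^ 2 * lam ^ 2 * s := by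
  classical
  set S : Finset (Fin d) := Finset.univ.filter (fun j => w j ≠ 0) with hS
  have hScard : S.card ≤ s := by
    have : {j | w j ≠ 0}.ncard = S.card := by
      rw [hS]
      rw [Set.ncard_eq_toFinset_card']
      congr 1
      ext j
      simp
    omega
  set a : ℝ := ∑ j ∈ S, |u j| with ha
  set b : ℝ := ∑ j ∈ Sᶜ, |u j| with hb
  have ha0 : 0 ≤ a := Finset.sum_nonneg (fun j _ => abs_nonneg _)
  have hb0 : 0 ≤ b := Finset.sum_nonneg (fun j _ => abs_nonneg _)
  have htot : ∑ j, |u j| = a + b := (Finset.sum_add_sum_compl S _).symm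
  have hT0 : 0 ≤ u ⬝ᵥ Chat *ᵥ u := by simpa using hC.dotProduct_mulVec_nonneg u
  have hdiff : ∑ j, (|w j| - |u j + w j|) ≤ a - b := by
    rw [← Finset.sum_add_sum_compl S (fun j => |w j| - |u j + w j|)]
    have h1 : ∑ j ∈ S, (|w j| - |u j + w j|) ≤ a := by
      apply Finset.sum_le_sum
      intro j _
      have := abs_sub_abs_le_abs_sub (w j) (u j + w j)
      have h2 : |w j - (u j + w j)| = |u j| := by rw [show w j - (u j + w j) = -u j by ring, abs_neg]
      linarith
    have h2 : ∑ j ∈ Sᶜ, (|w j| - |u j + w j|) = -b := by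
      rw [hb, ← Finset.sum_neg_distrib]
      apply Finset.sum_congr rfl
      intro j hj
      have : w j = 0 := by
        simp [hS, Finset.mem_compl, Finset.mem_filter] at hj
        exact hj
      simp [this]
    linarith
  set T : ℝ := u ⬝ᵥ Chat *ᵥ u
  have hγ0 : (0:ℝ) < γ := by linarith
  have hRHS0 : (0:ℝ) ≤ ((1 + γ + τ) / (γ * κ)) ^ 2 * lam ^ 2 * s := by positivity
  -- main reduction
  have hmain : 2 * τ * γ⁻¹ * lam * (a + b) + 2 * lam * (a - b) + 2 * (lam / γ) * (a + b)
      = 2 * (lam / γ) * ((γ + 1 + τ) * a - (γ - 1 - τ) * b) := by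
    field_simp
    ring
  rw [htot]
  by_cases hcase : (γ + 1 + τ) * a ≤ (γ - 1 - τ) * b
  · have h1 : 2 * (lam / γ) * ((γ + 1 + τ) * a - (γ - 1 - τ) * b) ≤ 0 := by
      apply mul_nonpos_of_nonneg_of_nonpos
      · positivity
      · linarith
    nlinarith [Finset.sum_le_sum (fun j (_ : j ∈ Finset.univ) => le_refl (|w j| - |u j + w j|))]
  · push_neg at hcase
    have hgt : (0:ℝ) < γ - τ - 1 := by linarith
    have hbca : b ≤ c₀ * a := by
      rw [hc₀, div_mul_eq_mul_div, le_div_iff₀ hgt]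
      nlinarith
    -- cone membership
    obtain ⟨I, hIcard, hIdom⟩ := topset (fun j => |u j|) s (by simpa using hsd)
    have haI : a ≤ ∑ i ∈ I, |u i| :=
      sum_dom (fun j => |u j|) (fun x => abs_nonneg _) S I (by omega) hIdom
    have hcone : inCone s c₀ u := by
      refine ⟨I, hIcard, hIdom, ?_⟩
      rw [htot]
      have hc₀0 : 0 ≤ c₀ := by rw [hc₀]; positivity
      nlinarith
    have hRE' := hRE u hcone
    -- Cauchy-Schwarz : a^2 ≤ s * ∑ u^2
    have hCS : a ^ 2 ≤ (s : ℝ) * ∑ j, u j ^ 2 := by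
      have h1 := sq_sum_le_card_mul_sum_sq (s := S) (f := fun j => |u j|)
      have h2 : ∑ j ∈ S, |u j| ^ 2 = ∑ j ∈ S, u j ^ 2 := by
        apply Finset.sum_congr rfl; intro j _; rw [sq_abs]
      have h3 : ∑ j ∈ S, u j ^ 2 ≤ ∑ j, u j ^ 2 :=
        Finset.sum_le_sum_of_subset_of_nonneg (Finset.subset_univ S)
          (fun j _ _ => sq_nonneg _)
      have h4 : (S.card : ℝ) ≤ (s : ℝ) := by exact_mod_cast hScard
      have h5 : (0:ℝ) ≤ ∑ j ∈ S, u j ^ 2 :=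
        Finset.sum_nonneg (fun j _ => sq_nonneg _)
      calc a ^ 2 ≤ (S.card : ℝ) * ∑ j ∈ S, u j ^ 2 := by rw [ha]; rw [h2] at h1; exact_mod_cast h1
        _ ≤ (s : ℝ) * ∑ j, u j ^ 2 := by
            apply mul_le_mul h4 h3 h5 (by positivity)
    have hP : κ ^ 2 * a ^ 2 ≤ (s:ℝ) * T := by
      calc κ ^ 2 * a ^ 2 ≤ κ ^ 2 * ((s:ℝ) * ∑ j, u j ^ 2) :=
            mul_le_mul_of_nonneg_left hCS (sq_nonneg κ)
        _ = (s:ℝ) * (κ ^ 2 * ∑ j, u j ^ 2) := by ring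
        _ ≤ (s:ℝ) * T := mul_le_mul_of_nonneg_left hRE' (by positivity)
    have hs0 : (0:ℝ) < s := by exact_mod_cast hs
    clear_value S a b T
    have key := arith_key γ τ lam κ a T s hγ0 hκ hlam hτ0 ha0 (by exact_mod_cast hs) hT0
      (by exact_mod_cast hP)
    have h1 : 2 * lam * (∑ j, (|w j| - |u j + w j|)) ≤ 2 * lam * (a - b) :=
      mul_le_mul_of_nonneg_left hdiff (by positivity)
    have h2 : 0 ≤ 2 * (lam / γ) * ((γ - 1 - τ) * b) := by
      apply mul_nonneg (by positivity)
      apply mul_nonneg (by linarith) hb0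
    linarith

lemma trace_symm {d : ℕ} (C X Y : Matrix (Fin d) (Fin d) ℝ) (h : Cᵀ = C) :
    (X * C * Yᵀ).trace = (Y * C * Xᵀ).trace := by
  conv_lhs => rw [← Matrix.trace_transpose]
  simp [Matrix.transpose_mul, h, Matrix.mul_assoc, Matrix.trace_mul_comm Y]

lemma trace_rows {d : ℕ} (X C : Matrix (Fin d) (Fin d) ℝ) :
    (X * C * Xᵀ).trace = ∑ i, (X i) ⬝ᵥ C *ᵥ (X i) := by
  simp [Matrix.trace, Matrix.mul_apply, dotProduct, Matrix.mulVec, Matrix.diag,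
    Finset.mul_sum, Finset.sum_mul]
  congr 1; ext i; rw [Finset.sum_comm]; congr 1; ext j; congr 1; ext k; ring

lemma trace_quad_nonneg {d : ℕ} (X C : Matrix (Fin d) (Fin d) ℝ) (hC : C.PosSemidef) :
    0 ≤ (X * C * Xᵀ).trace := by
  rw [trace_rows]
  exact Finset.sum_nonneg (fun i _ => by simpa using hC.dotProduct_mulVec_nonneg (X i))

lemma matL1_convex {d : ℕ} (X Y : Matrix (Fin d) (Fin d) ℝ) (t : ℝ) (ht0 : 0 ≤ t) (ht1 : t ≤ 1) :
    matL1 (X + t • (Y - X)) ≤ (1 - t) * matL1 X + t * matL1 Y := by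
  unfold matL1
  rw [Finset.mul_sum, Finset.mul_sum, ← Finset.sum_add_distrib]
  apply Finset.sum_le_sum
  intro i _
  rw [Finset.mul_sum, Finset.mul_sum, ← Finset.sum_add_distrib]
  apply Finset.sum_le_sum
  intro j _
  have h1 : (X + t • (Y - X)) i j = (1 - t) * X i j + t * Y i j := by
    simp [Matrix.add_apply, Matrix.smul_apply, Matrix.sub_apply]
    ring
  rw [h1]
  calc |(1 - t) * X i j + t * Y i j| ≤ |(1 - t) * X i j| + |t * Y i j| := abs_add_le _ _
    _ = (1 - t) * |X i j| + t * |Y i j| := by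
        rw [abs_mul, abs_mul, abs_of_nonneg (by linarith : (0:ℝ) ≤ 1 - t), abs_of_nonneg ht0]

lemma first_order {d : ℕ} (Chat eps A₀ : Matrix (Fin d) (Fin d) ℝ) (lam : ℝ)
    (hC : Chat.PosSemidef) (hlam : 0 ≤ lam) (Ahat : Matrix (Fin d) (Fin d) ℝ)
    (hmin : ∀ A : Matrix (Fin d) (Fin d) ℝ,
      lassoObj Chat eps A₀ lam Ahat ≤ lassoObj Chat eps A₀ lam A)
    (A : Matrix (Fin d) (Fin d) ℝ) :
    0 ≤ ((A - Ahat)ᵀ * eps).trace + ((Ahat - A₀) * Chat * (A - Ahat)ᵀ).trace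
      + lam * (matL1 A - matL1 Ahat) := by
  have hCs : Chatᵀ = Chat := by
    have := hC.1
    simpa [Matrix.IsHermitian] using this
  set D := A - Ahat with hD
  set α := ((A - Ahat)ᵀ * eps).trace + ((Ahat - A₀) * Chat * (A - Ahat)ᵀ).trace
      + lam * (matL1 A - matL1 Ahat) with hα
  set β := (1/2 : ℝ) * (D * Chat * Dᵀ).trace with hβ
  have hβ0 : 0 ≤ β := by
    rw [hβ]
    have := trace_quad_nonneg D Chat hC
    linarith
  have hq : ∀ t : ℝ, 0 < t → t ≤ 1 → 0 ≤ t * α + t ^ 2 * β := by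
    intro t ht0 ht1
    have hm := hmin (Ahat + t • D)
    unfold lassoObj at hm
    have e1 : ((Ahat + t • D)ᵀ * eps).trace = (Ahatᵀ * eps).trace + t * (Dᵀ * eps).trace := by
      simp [Matrix.transpose_add, Matrix.transpose_smul, Matrix.add_mul, Matrix.smul_mul,
        Matrix.trace_add, Matrix.trace_smul]
    have e2 : ((Ahat + t • D - A₀) * Chat * (Ahat + t • D - A₀)ᵀ).trace
        = ((Ahat - A₀) * Chat * (Ahat - A₀)ᵀ).trace
          + 2 * t * ((Ahat - A₀) * Chat * Dᵀ).trace + t ^ 2 * (D * Chat * Dᵀ).trace := by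
      have e0 : Ahat + t • D - A₀ = (Ahat - A₀) + t • D := by abel
      rw [e0]
      have hsym : (D * Chat * (Ahatᵀ - A₀ᵀ)).trace = ((Ahat - A₀) * Chat * Dᵀ).trace := by
        rw [← Matrix.transpose_sub]
        exact trace_symm Chat D (Ahat - A₀) hCs
      simp [Matrix.add_mul, Matrix.mul_add, Matrix.transpose_add, Matrix.transpose_smul,
        Matrix.transpose_sub, Matrix.smul_mul, Matrix.mul_smul, Matrix.trace_add,
        Matrix.trace_smul, smul_eq_mul]
      rw [hsym]
      ring
    have e3 : matL1 (Ahat + t • D) ≤ (1 - t) * matL1 Ahat + t * matL1 A :=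
      matL1_convex Ahat A t (le_of_lt ht0) ht1
    have e4 : (Dᵀ * eps).trace = ((A - Ahat)ᵀ * eps).trace := by rw [hD]
    rw [e1, e2] at hm
    have e5 := mul_le_mul_of_nonneg_left e3 hlam
    rw [hα, ← hD, hβ]
    nlinarith [hm, e5]
  by_contra hαneg
  push_neg at hαneg
  set t := min 1 ((-α) / (2 * β + 1)) with htdef
  have hβ1 : (0:ℝ) < 2 * β + 1 := by linarith
  have ht0 : 0 < t := lt_min one_pos (div_pos (by linarith) hβ1)
  have ht1 : t ≤ 1 := min_le_left _ _
  have h := hq t ht0 ht1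
  have h2 : 0 ≤ α + t * β := by
    have : 0 ≤ t * (α + t * β) := by nlinarith
    exact (mul_nonneg_iff_of_pos_left ht0).mp this
  have htle : t ≤ (-α) / (2 * β + 1) := min_le_right _ _
  have h3 : t * β ≤ (-α) / (2 * β + 1) * β := mul_le_mul_of_nonneg_right htle hβ0
  have h4 : (-α) / (2 * β + 1) * β < -α := by
    rw [div_mul_eq_mul_div, div_lt_iff₀ hβ1]
    nlinarith
  linarith

lemma trace_eps_bound {d : ℕ} (X eps : Matrix (Fin d) (Fin d) ℝ) (c : ℝ)
    (hc : 0 ≤ c) (heps : ∀ i j, |eps i j| ≤ c) :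
    -((Xᵀ * eps).trace) ≤ c * matL1 X := by
  have h1 : (Xᵀ * eps).trace = ∑ i, ∑ k, X k i * eps k i := by
    simp [Matrix.trace, Matrix.diag, Matrix.mul_apply, Matrix.transpose_apply]
  rw [h1, ← Finset.sum_neg_distrib]
  have h2 : c * matL1 X = ∑ i, ∑ k, c * |X k i| := by
    unfold matL1
    rw [Finset.mul_sum, Finset.sum_comm]
    congr 1; ext i
    rw [Finset.mul_sum]
  rw [h2]
  apply Finset.sum_le_sum
  intro i _
  rw [← Finset.sum_neg_distrib]
  apply Finset.sum_le_sum
  intro k _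
  calc -(X k i * eps k i) ≤ |X k i * eps k i| := neg_le_abs _
    _ = |X k i| * |eps k i| := abs_mul _ _
    _ ≤ |X k i| * c := mul_le_mul_of_nonneg_left (heps k i) (abs_nonneg _)
    _ = c * |X k i| := mul_comm _ _

lemma quad_identity {d : ℕ} (C B Dm : Matrix (Fin d) (Fin d) ℝ) (hCs : Cᵀ = C) :
    ((B - Dm) * C * (B - Dm)ᵀ).trace
      = (B * C * Bᵀ).trace - 2 * ((B * C * Dmᵀ).trace) + (Dm * C * Dmᵀ).trace := by
  have hsym : (Dm * C * Bᵀ).trace = (B * C * Dmᵀ).trace := trace_symm C Dm B hCs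
  simp [Matrix.sub_mul, Matrix.mul_sub, Matrix.transpose_sub, Matrix.trace_sub]
  linarith

/-- sharp oracle inequality for the Lasso. -/
theorem stmt_7 (d s : ℕ) (hd : 1 ≤ d) (hs : 1 ≤ s) (hsd : s ≤ d)
    (γ τ lam κ : ℝ) (hγ : 1 < γ) (hτ0 : 0 ≤ τ) (hτ : τ < γ - 1)
    (hlam : 0 < lam) (hκ : 0 < κ)
    (c₀ : ℝ) (hc₀ : c₀ = (γ + τ + 1) / (γ - τ - 1))
    (Chat eps : Matrix (Fin d) (Fin d) ℝ) (hC : Chat.PosSemidef)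
    (hRE : ∀ u : Fin d → ℝ, inCone s c₀ u → κ ^ 2 * ∑ i, u i ^ 2 ≤ u ⬝ᵥ Chat *ᵥ u)
    (heps : ∀ i j, |eps i j| ≤ lam / γ)
    (A₀ : Matrix (Fin d) (Fin d) ℝ) (hA₀ : rowSparse s A₀)
    (Ahat : Matrix (Fin d) (Fin d) ℝ)
    (hmin : ∀ A : Matrix (Fin d) (Fin d) ℝ,
      lassoObj Chat eps A₀ lam Ahat ≤ lassoObj Chat eps A₀ lam A) :
    ∀ A : Matrix (Fin d) (Fin d) ℝ, rowSparse s A →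
      2 * τ * γ⁻¹ * lam * matL1 (Ahat - A) + ((Ahat - A₀) * Chat * (Ahat - A₀)ᵀ).trace ≤
        ((A - A₀) * Chat * (A - A₀)ᵀ).trace +
          ((1 + γ + τ) / (γ * κ)) ^ 2 * lam ^ 2 * d * s := by
  intro A hA
  have hγ0 : (0:ℝ) < γ := by linarith
  have hCs : Chatᵀ = Chat := by
    have := hC.1
    simpa [Matrix.IsHermitian] using this
  set Dm := Ahat - A with hDm
  -- first-order optimality
  have hfo := first_order Chat eps A₀ lam hC hlam.le Ahat hmin A
  have hstar : (Dmᵀ * eps).trace + ((Ahat - A₀) * Chat * Dmᵀ).trace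
      ≤ lam * (matL1 A - matL1 Ahat) := by
    have e1 : A - Ahat = -Dm := by rw [hDm]; simp
    rw [e1] at hfo
    simp only [Matrix.transpose_neg, Matrix.neg_mul, Matrix.mul_neg, Matrix.trace_neg] at hfo
    linarith
  -- quadratic identity
  have e2 : A - A₀ = (Ahat - A₀) - Dm := by rw [hDm]; abel
  have hid : ((A - A₀) * Chat * (A - A₀)ᵀ).trace
      = ((Ahat - A₀) * Chat * (Ahat - A₀)ᵀ).trace
        - 2 * (((Ahat - A₀) * Chat * Dmᵀ).trace) + (Dm * Chat * Dmᵀ).trace := by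
    rw [e2]
    exact quad_identity Chat (Ahat - A₀) Dm hCs
  -- eps bound
  have hepsb : -((Dmᵀ * eps).trace) ≤ (lam / γ) * matL1 Dm :=
    trace_eps_bound Dm eps (lam / γ) (by positivity) heps
  -- row-wise core inequality
  have hrow : ∀ i : Fin d,
      2 * τ * γ⁻¹ * lam * (∑ j, |Dm i j|) + 2 * lam * (∑ j, (|A i j| - |Ahat i j|))
        + 2 * (lam / γ) * (∑ j, |Dm i j|) - (Dm i) ⬝ᵥ Chat *ᵥ (Dm i)
        ≤ ((1 + γ + τ) / (γ * κ)) ^ 2 * lam ^ 2 * s := by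
    intro i
    have h := row_core d s hs hsd γ τ lam κ hγ hτ0 hτ hlam hκ c₀ hc₀ Chat hC hRE
      (Dm i) (A i) (hA i)
    have e3 : ∀ j, Dm i j + A i j = Ahat i j := by
      intro j; rw [hDm]; simp [Matrix.sub_apply]
    have e4 : (∑ j, (|A i j| - |Dm i j + A i j|)) = ∑ j, (|A i j| - |Ahat i j|) := by
      apply Finset.sum_congr rfl
      intro j _; rw [e3 j]
    rw [e4] at h
    exact h
  have hsum := Finset.sum_le_sum (fun i (_ : i ∈ Finset.univ) => hrow i)
  rw [Finset.sum_const, Finset.card_univ, Fintype.card_fin, nsmul_eq_mul] at hsum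
  -- identify the summed parts
  have eL : ∑ i, ∑ j, |Dm i j| = matL1 Dm := rfl
  have eA : ∑ i, ∑ j, (|A i j| - |Ahat i j|) = matL1 A - matL1 Ahat := by
    unfold matL1
    rw [← Finset.sum_sub_distrib]
    apply Finset.sum_congr rfl
    intro i _
    rw [← Finset.sum_sub_distrib]
  have eT : ∑ i, (Dm i) ⬝ᵥ Chat *ᵥ (Dm i) = (Dm * Chat * Dmᵀ).trace :=
    (trace_rows Dm Chat).symm
  have hsum2 : 2 * τ * γ⁻¹ * lam * matL1 Dm + 2 * lam * (matL1 A - matL1 Ahat)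
      + 2 * (lam / γ) * matL1 Dm - (Dm * Chat * Dmᵀ).trace
      ≤ (d : ℝ) * (((1 + γ + τ) / (γ * κ)) ^ 2 * lam ^ 2 * s) := by
    have expand : ∑ i, (2 * τ * γ⁻¹ * lam * (∑ j, |Dm i j|)
        + 2 * lam * (∑ j, (|A i j| - |Ahat i j|))
        + 2 * (lam / γ) * (∑ j, |Dm i j|) - (Dm i) ⬝ᵥ Chat *ᵥ (Dm i))
        = 2 * τ * γ⁻¹ * lam * matL1 Dm + 2 * lam * (matL1 A - matL1 Ahat)
          + 2 * (lam / γ) * matL1 Dm - (Dm * Chat * Dmᵀ).trace := by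
      unfold matL1
      simp only [Finset.sum_sub_distrib, Finset.sum_add_distrib, ← Finset.mul_sum]
      rw [eT]
    rw [expand] at hsum
    exact hsum
  have hfinal : (d : ℝ) * (((1 + γ + τ) / (γ * κ)) ^ 2 * lam ^ 2 * s)
      = ((1 + γ + τ) / (γ * κ)) ^ 2 * lam ^ 2 * d * s := by ring
  linarith
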